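/- Let T = (T_{i,j}) be a matrix and let a₁, …, aₘ and b₁, …, bₙ be real numbers with aᵢ - bⱼ ≥ d > 0 for all i, j. Then the Schur (entrywise) product matrix with entries T_{i,j}/(aᵢ - bⱼ) has operator norm at most (1/d)·‖T‖. -/

import Mathlib

open MeasureTheory Real Set
open scoped ComplexConjugate

/-- The ℓ²→ℓ² operator norm of a rectangular complex matrix. -/
noncomputable def opNormRect {m n : ℕ} (A : Matrix (Fin m) (Fin n) ℂ) : ℝ :=
  ‖LinearMap.toContinuousLinearMap (Matrix.toEuclideanLin A)‖

noncomputable def pairing {m n : ℕ} (A : Matrix (Fin m) (Fin n) ℂ)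
    (y : EuclideanSpace ℂ (Fin m)) (x : EuclideanSpace ℂ (Fin n)) : ℂ :=
  ∑ i, ∑ j, conj (y i) * A i j * x j

lemma pairing_eq_inner {m n : ℕ} (A : Matrix (Fin m) (Fin n) ℂ)
    (y : EuclideanSpace ℂ (Fin m)) (x : EuclideanSpace ℂ (Fin n)) :
    pairing A y x = inner ℂ y (Matrix.toEuclideanLin A x) := by
  simp [pairing, PiLp.inner_apply, Matrix.toEuclideanLin_apply, Matrix.mulVec,
    dotProduct, Finset.mul_sum, mul_comm, mul_left_comm, mul_assoc]

lemma pairing_le {m n : ℕ} (A : Matrix (Fin m) (Fin n) ℂ)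
    (y : EuclideanSpace ℂ (Fin m)) (x : EuclideanSpace ℂ (Fin n)) :
    ‖pairing A y x‖ ≤ opNormRect A * ‖y‖ * ‖x‖ := by
  rw [pairing_eq_inner]
  calc ‖(inner ℂ y (Matrix.toEuclideanLin A x) : ℂ)‖ ≤ ‖y‖ * ‖Matrix.toEuclideanLin A x‖ :=
        norm_inner_le_norm _ _
    _ ≤ ‖y‖ * (opNormRect A * ‖x‖) := by
        apply mul_le_mul_of_nonneg_left _ (norm_nonneg _)
        exact (LinearMap.toContinuousLinearMap (Matrix.toEuclideanLin A)).le_opNorm x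
    _ = opNormRect A * ‖y‖ * ‖x‖ := by ring

lemma opNorm_le_of_pairing {m n : ℕ} (A : Matrix (Fin m) (Fin n) ℂ) (C : ℝ) (hC : 0 ≤ C)
    (h : ∀ (y : EuclideanSpace ℂ (Fin m)) (x : EuclideanSpace ℂ (Fin n)),
      ‖pairing A y x‖ ≤ C * ‖y‖ * ‖x‖) :
    opNormRect A ≤ C := by
  apply ContinuousLinearMap.opNorm_le_bound _ hC
  intro x
  set v : EuclideanSpace ℂ (Fin m) := Matrix.toEuclideanLin A x with hv
  have key : ‖v‖ * ‖v‖ ≤ (C * ‖x‖) * ‖v‖ := by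
    have h1 : (‖v‖ : ℝ) * ‖v‖ = ‖(inner ℂ v v : ℂ)‖ := by
      rw [inner_self_eq_norm_sq_to_K (𝕜 := ℂ) v]
      simp [norm_pow]
      ring
    rw [h1]
    calc ‖(inner ℂ v v : ℂ)‖ = ‖pairing A v x‖ := by rw [pairing_eq_inner]
      _ ≤ C * ‖v‖ * ‖x‖ := h v x
      _ = (C * ‖x‖) * ‖v‖ := by ring
  rcases eq_or_lt_of_le (norm_nonneg v) with h0 | h0
  · show ‖v‖ ≤ C * ‖x‖
    rw [← h0]
    positivity
  · exact le_of_mul_le_mul_right key h0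

lemma norm_scaled {n : ℕ} (x y : EuclideanSpace ℂ (Fin n)) (c : Fin n → ℝ) (hc : ∀ j, c j ≤ 0)
    (hy : ∀ j, y j = (Real.exp (c j) : ℂ) * x j) : ‖y‖ ≤ ‖x‖ := by
  rw [EuclideanSpace.norm_eq, EuclideanSpace.norm_eq]
  apply Real.sqrt_le_sqrt
  apply Finset.sum_le_sum
  intro j _
  have h1 : ‖y j‖ ≤ ‖x j‖ := by
    rw [hy j, norm_mul, Complex.norm_real, Real.norm_eq_abs,
      abs_of_pos (Real.exp_pos _)]
    have : Real.exp (c j) ≤ 1 := Real.exp_le_one_iff.mpr (hc j)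
    exact mul_le_of_le_one_left (norm_nonneg _) this
  exact pow_le_pow_left₀ (norm_nonneg _) h1 2

lemma integral_exp_neg_mul_Ioi' {c : ℝ} (hc : 0 < c) :
    ∫ t in Ioi (0:ℝ), Real.exp (-(t * c)) = 1 / c := by
  have h := integral_comp_mul_right_Ioi (fun u => Real.exp (-u)) 0 hc
  simp only [zero_mul] at h
  rw [h, integral_exp_neg_Ioi, neg_zero, Real.exp_zero, smul_eq_mul, mul_one, one_div]

lemma integrand_integrable {c : ℝ} (hc : 0 < c) (K : ℂ) :
    IntegrableOn (fun t : ℝ => K * ((Real.exp (-(t * c)) : ℝ) : ℂ)) (Ioi (0:ℝ)) := by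
  apply Integrable.const_mul
  have h2 : IntegrableOn (fun t : ℝ => Real.exp (-(t * c))) (Ioi (0:ℝ)) := by
    have := exp_neg_integrableOn_Ioi 0 hc
    simpa [mul_comm] using this
  exact h2.ofReal

lemma integral_term {c : ℝ} (hc : 0 < c) (K : ℂ) :
    ∫ t in Ioi (0:ℝ), K * ((Real.exp (-(t * c)) : ℝ) : ℂ) = K * ((c : ℂ))⁻¹ := by
  rw [MeasureTheory.integral_const_mul]
  congr 1
  have h3 : ∫ t in Ioi (0:ℝ), ((Real.exp (-(t * c)) : ℝ) : ℂ) =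
      ((∫ t in Ioi (0:ℝ), Real.exp (-(t * c)) : ℝ) : ℂ) := integral_ofReal
  rw [h3, integral_exp_neg_mul_Ioi' hc]
  push_cast
  rw [one_div]

lemma key_pairing {m n : ℕ} (T : Matrix (Fin m) (Fin n) ℂ)
    (a : Fin m → ℝ) (b : Fin n → ℝ) (d : ℝ) (hd : 0 < d)
    (hsep : ∀ (i : Fin m) (j : Fin n), d ≤ a i - b j)
    (y : EuclideanSpace ℂ (Fin m)) (x : EuclideanSpace ℂ (Fin n)) :
    ‖pairing (Matrix.of fun i j => (T i j) / ((a i : ℂ) - (b j : ℂ))) y x‖ ≤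
      (1 / d) * opNormRect T * ‖y‖ * ‖x‖ := by
  have hT : 0 ≤ opNormRect T := norm_nonneg _
  rcases isEmpty_or_nonempty (Fin m) with hm | hm
  · simp [pairing]; positivity
  rcases isEmpty_or_nonempty (Fin n) with hn | hn
  · simp [pairing]; positivity
  -- extremes
  set α : ℝ := Finset.univ.inf' Finset.univ_nonempty a with hα
  set β : ℝ := Finset.univ.sup' Finset.univ_nonempty b with hβ
  have ha : ∀ i, α ≤ a i := fun i => Finset.inf'_le _ (Finset.mem_univ i)
  have hb : ∀ j, b j ≤ β := fun j => Finset.le_sup' _ (Finset.mem_univ j)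
  have hαβ : d ≤ α - β := by
    obtain ⟨i0, _, hi0⟩ := Finset.exists_mem_eq_inf' (Finset.univ_nonempty) a
    obtain ⟨j0, _, hj0⟩ := Finset.exists_mem_eq_sup' (Finset.univ_nonempty) b
    rw [hα, hβ, hi0, hj0]; exact hsep i0 j0
  have hsep' : ∀ i j, (0:ℝ) < a i - b j := fun i j => lt_of_lt_of_le hd (hsep i j)
  set C0 : ℝ := opNormRect T * ‖y‖ * ‖x‖ with hC0
  have hC0' : 0 ≤ C0 := by positivity
  -- the integrand
  set g : ℝ → ℂ := fun t => ∑ i, ∑ j,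
    conj (y i) * T i j * x j * ((Real.exp (-(t * (a i - b j))) : ℝ) : ℂ) with hg
  -- integrability
  have hgint : IntegrableOn g (Ioi (0:ℝ)) := by
    apply MeasureTheory.integrable_finset_sum
    intro i _
    apply MeasureTheory.integrable_finset_sum
    intro j _
    simpa [mul_assoc, IntegrableOn] using integrand_integrable (hsep' i j) (conj (y i) * T i j * x j)
  -- value of the integral
  have hval : ∫ t in Ioi (0:ℝ), g t =
      pairing (Matrix.of fun i j => (T i j) / ((a i : ℂ) - (b j : ℂ))) y x := by
    rw [hg, MeasureTheory.integral_finset_sum]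
    · apply Finset.sum_congr rfl
      intro i _
      rw [MeasureTheory.integral_finset_sum]
      · apply Finset.sum_congr rfl
        intro j _
        have := integral_term (hsep' i j) (conj (y i) * T i j * x j)
        simp only [mul_assoc] at this ⊢
        rw [this]
        simp only [Matrix.of_apply]
        rw [div_eq_mul_inv]
        push_cast
        ring
      · intro j _
        simpa [mul_assoc, IntegrableOn] using integrand_integrable (hsep' i j) (conj (y i) * T i j * x j)
    · intro i _
      apply MeasureTheory.integrable_finset_sum
      intro j _
      simpa [mul_assoc, IntegrableOn] using integrand_integrable (hsep' i j) (conj (y i) * T i j * x j)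
  -- pointwise bound
  have hbound : ∀ t ∈ Ioi (0:ℝ), ‖g t‖ ≤ C0 * Real.exp (-(t * d)) := by
    intro t ht
    have ht' : (0:ℝ) ≤ t := le_of_lt ht
    set y' : EuclideanSpace ℂ (Fin m) := WithLp.toLp 2 (fun i => ((Real.exp (-(t * (a i - α))) : ℝ) : ℂ) * y i)
      with hy'
    set x' : EuclideanSpace ℂ (Fin n) := WithLp.toLp 2 (fun j => ((Real.exp (-(t * (β - b j))) : ℝ) : ℂ) * x j)
      with hx'
    have hgy : g t = ((Real.exp (-(t * (α - β))) : ℝ) : ℂ) * pairing T y' x' := by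
      rw [hg, pairing, Finset.mul_sum]
      apply Finset.sum_congr rfl
      intro i _
      rw [Finset.mul_sum]
      apply Finset.sum_congr rfl
      intro j _
      simp only [hy', hx', map_mul, Complex.conj_ofReal]
      have hee : Real.exp (-(t * (α - β))) * Real.exp (-(t * (a i - α))) *
          Real.exp (-(t * (β - b j))) = Real.exp (-(t * (a i - b j))) := by
        rw [← Real.exp_add, ← Real.exp_add]; ring_nf
      calc conj (y i) * T i j * x j * ((Real.exp (-(t * (a i - b j))) : ℝ) : ℂ)
          = conj (y i) * T i j * x j * ((Real.exp (-(t * (α - β))) *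
              Real.exp (-(t * (a i - α))) * Real.exp (-(t * (β - b j))) : ℝ) : ℂ) := by rw [hee]
        _ = ((Real.exp (-(t * (α - β))) : ℝ) : ℂ) *
            (((Real.exp (-(t * (a i - α))) : ℝ) : ℂ) * conj (y i) * T i j *
              (((Real.exp (-(t * (β - b j))) : ℝ) : ℂ) * x j)) := by push_cast; ring
    rw [hgy, norm_mul, Complex.norm_real, Real.norm_eq_abs, abs_of_pos (Real.exp_pos _)]
    have hny : ‖y'‖ ≤ ‖y‖ := by
      apply norm_scaled y y' (fun i => -(t * (a i - α)))
      · intro i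
        have := ha i
        nlinarith
      · intro i; rfl
    have hnx : ‖x'‖ ≤ ‖x‖ := by
      apply norm_scaled x x' (fun j => -(t * (β - b j)))
      · intro j
        have := hb j
        nlinarith
      · intro j; rfl
    have h1 : ‖pairing T y' x'‖ ≤ C0 := by
      calc ‖pairing T y' x'‖ ≤ opNormRect T * ‖y'‖ * ‖x'‖ := pairing_le T y' x'
        _ ≤ opNormRect T * ‖y‖ * ‖x‖ := by
            apply mul_le_mul (mul_le_mul_of_nonneg_left hny hT) hnx (norm_nonneg _)
            positivity
    have h2 : Real.exp (-(t * (α - β))) ≤ Real.exp (-(t * d)) := by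
      apply Real.exp_le_exp.mpr
      nlinarith
    calc Real.exp (-(t * (α - β))) * ‖pairing T y' x'‖
        ≤ Real.exp (-(t * d)) * C0 := by
          apply mul_le_mul h2 h1 (norm_nonneg _) (le_of_lt (Real.exp_pos _))
      _ = C0 * Real.exp (-(t * d)) := mul_comm _ _
  -- conclude
  rw [← hval]
  have hdom : IntegrableOn (fun t : ℝ => C0 * Real.exp (-(t * d))) (Ioi (0:ℝ)) := by
    apply Integrable.const_mul
    have := exp_neg_integrableOn_Ioi 0 hd
    simpa [mul_comm, IntegrableOn] using this
  have hnormle : ‖∫ t in Ioi (0:ℝ), g t‖ ≤ ∫ t in Ioi (0:ℝ), C0 * Real.exp (-(t * d)) := by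
    apply MeasureTheory.norm_integral_le_of_norm_le hdom
    filter_upwards [ae_restrict_mem measurableSet_Ioi] with t ht
    exact hbound t ht
  calc ‖∫ t in Ioi (0:ℝ), g t‖ ≤ ∫ t in Ioi (0:ℝ), C0 * Real.exp (-(t * d)) := hnormle
    _ = C0 * (1 / d) := by rw [MeasureTheory.integral_const_mul, integral_exp_neg_mul_Ioi' hd]
    _ = (1 / d) * opNormRect T * ‖y‖ * ‖x‖ := by rw [hC0]; ring

/-- **Pearcy–Shields Schur multiplier bound.**
If `T` is an `m × n` complex matrix and `a i - b j ≥ d > 0` for all `i, j`, then the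
entrywise (Schur) product matrix `(T i j / (a i - b j))` has operator norm at most
`(1/d) * ‖T‖`. -/
theorem stmt_3 {m n : ℕ} (T : Matrix (Fin m) (Fin n) ℂ)
    (a : Fin m → ℝ) (b : Fin n → ℝ) (d : ℝ) (hd : 0 < d)
    (hsep : ∀ (i : Fin m) (j : Fin n), d ≤ a i - b j) :
    opNormRect (Matrix.of fun i j => (T i j) / ((a i : ℂ) - (b j : ℂ))) ≤
      (1 / d) * opNormRect T := by
  apply opNorm_le_of_pairing
  · have : 0 ≤ opNormRect T := norm_nonneg _
    positivity
  · intro y x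
    exact key_pairing T a b d hd hsep y x
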